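/- (Partial transposes of spectral R-matrices commute with spectral R-matrices.) For every n ≥ 1 and all elements u, v, w, y of the center of A, writing R(u,v) := u·(R̄_n)ᵀ − v·R_n, one has (R(u,v))^{t1} · R(w,y) = R(w,y) · (R(u,v))^{t1}, where for a matrix Z indexed by Fin n × Fin n the partial transpose Z^{t1} is defined by Z^{t1}((i,a),(j,b)) = Z((j,a),(i,b)). -/

import Mathlib

open Matrix

variable {A : Type*} [Ring A]

/-- Kulish–Sklyanin trigonometric R-matrix with deformation parameter `q`
(`qi` denotes the inverse of `q`). -/
def Rmat (A : Type*) [Ring A] (q qi : A) (n : ℕ) :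
    Matrix (Fin n × Fin n) (Fin n × Fin n) A := fun x y =>
  if x.1 = x.2 ∧ x.2 = y.1 ∧ y.1 = y.2 then q
  else if x.1 = y.1 ∧ x.2 = y.2 then 1
  else if x.1 = y.2 ∧ x.2 = y.1 ∧ x.2 < x.1 then q - qi
  else 0

/-- Permutation-type matrix with (possibly) rectangular tensor indices. -/
def PmatG (A : Type*) [Ring A] (m n : ℕ) :
    Matrix (Fin m × Fin n) (Fin n × Fin m) A := fun x y =>
  if x.1 = y.2 ∧ x.2 = y.1 then 1 else 0

/-- The permutation matrix `P`. -/
def Pmat (A : Type*) [Ring A] (n : ℕ) :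
    Matrix (Fin n × Fin n) (Fin n × Fin n) A := PmatG A n n

/-- Kronecker product `X ⊠ Y` : entry at `((i,a),(j,b))` is `X i j * Y a b`. -/
def kron {I J K L : Type*} (X : Matrix I J A) (Y : Matrix K L A) :
    Matrix (I × K) (J × L) A := fun p r => X p.1 r.1 * Y p.2 r.2

/-- Opposite-order Kronecker product `X ⊠' Y` : entry at `((i,a),(j,b))` is `Y a b * X i j`. -/
def kron' {I J K L : Type*} (X : Matrix I J A) (Y : Matrix K L A) :
    Matrix (I × K) (J × L) A := fun p r => Y p.2 r.2 * X p.1 r.1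

/-- Partial transposition in the first tensor factor: `Z^{t1}((i,a),(j,b)) = Z((j,a),(i,b))`. -/
def ptrans {n : ℕ} (Z : Matrix (Fin n × Fin n) (Fin n × Fin n) A) :
    Matrix (Fin n × Fin n) (Fin n × Fin n) A := fun x y => Z (y.1, x.2) (x.1, y.2)

def Gmat (R : Type*) [CommRing R] (a b c d : R) (n : ℕ) :
    Matrix (Fin n × Fin n) (Fin n × Fin n) R := fun x y =>
  if x.1 = x.2 ∧ x.2 = y.1 ∧ y.1 = y.2 then a
  else if x.1 = y.1 ∧ x.2 = y.2 then b
  else if x.1 = y.2 ∧ x.2 = y.1 ∧ x.2 < x.1 then c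
  else if x.1 = y.2 ∧ x.2 = y.1 then d
  else 0

variable {R : Type*} [CommRing R]

lemma swap_ne {α : Type*} {k x : α × α} (h : k ≠ (x.2, x.1)) : x ≠ (k.2, k.1) :=
  fun e => h (by rw [e])

lemma Gmat_eq_zero {n : ℕ} (a b c d : R) {k x : Fin n × Fin n} (h1 : k ≠ x)
    (h2 : k ≠ (x.2, x.1)) : Gmat R a b c d n k x = 0 := by
  simp only [Gmat]
  split_ifs with c1 c2 c3 c4
  · exact (h1 (Prod.ext_iff.mpr ⟨c1.1.trans c1.2.1, c1.2.1.trans c1.2.2⟩)).elim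
  · exact (h1 (Prod.ext_iff.mpr c2)).elim
  · exact (h2 (Prod.ext_iff.mpr ⟨c3.1, c3.2.1⟩)).elim
  · exact (h2 (Prod.ext_iff.mpr ⟨c4.1, c4.2⟩)).elim
  · rfl

lemma mul_sparse_right {n : ℕ} (M N : Matrix (Fin n × Fin n) (Fin n × Fin n) R)
    (z x : Fin n × Fin n) (hN : ∀ k, k ≠ z → k ≠ (z.2, z.1) → N k z = 0) :
    (M * N) x z = M x z * N z z +
      if z.1 = z.2 then 0 else M x (z.2, z.1) * N (z.2, z.1) z := by
  obtain ⟨z1, z2⟩ := z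
  rw [Matrix.mul_apply]
  rw [← Finset.sum_subset (Finset.subset_univ ({(z1, z2), (z2, z1)} : Finset _))
    (fun k _ hk => by
      simp only [Finset.mem_insert, Finset.mem_singleton] at hk
      push_neg at hk
      rw [hN k hk.1 hk.2, mul_zero])]
  by_cases h : z1 = z2
  · subst h; simp
  · rw [Finset.sum_pair (by simp [Prod.ext_iff]; exact fun e _ => h e)]
    simp [h]

lemma mul_sparse_left {n : ℕ} (M N : Matrix (Fin n × Fin n) (Fin n × Fin n) R)
    (x z : Fin n × Fin n) (hM : ∀ k, k ≠ x → k ≠ (x.2, x.1) → M x k = 0) :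
    (M * N) x z = M x x * N x z +
      if x.1 = x.2 then 0 else M x (x.2, x.1) * N (x.2, x.1) z := by
  obtain ⟨x1, x2⟩ := x
  rw [Matrix.mul_apply]
  rw [← Finset.sum_subset (Finset.subset_univ ({(x1, x2), (x2, x1)} : Finset _))
    (fun k _ hk => by
      simp only [Finset.mem_insert, Finset.mem_singleton] at hk
      push_neg at hk
      rw [hM k hk.1 hk.2, zero_mul])]
  by_cases h : x1 = x2
  · subst h; simp
  · rw [Finset.sum_pair (by simp [Prod.ext_iff]; exact fun e _ => h e)]
    simp [h]

theorem Gmat_comm (a b c d a' b' c' d' : R) (n : ℕ) :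
    ptrans (Gmat R a b c d n) * Gmat R a' b' c' d' n =
      Gmat R a' b' c' d' n * ptrans (Gmat R a b c d n) := by
  ext x z
  rw [mul_sparse_right _ _ z x (fun k hk1 hk2 => Gmat_eq_zero _ _ _ _ hk1 hk2),
      mul_sparse_left _ _ x z (fun k hk1 hk2 => Gmat_eq_zero _ _ _ _ hk1.symm (swap_ne hk2))]
  obtain ⟨i, a2⟩ := x
  obtain ⟨j, b2⟩ := z
  simp only [ptrans]
  rcases eq_or_ne i j with h1 | h1 <;>
  rcases eq_or_ne a2 b2 with h2 | h2 <;>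
  rcases eq_or_ne i b2 with h3 | h3 <;>
  rcases eq_or_ne a2 j with h4 | h4 <;>
  rcases eq_or_ne i a2 with h5 | h5 <;>
  rcases eq_or_ne j b2 with h6 | h6 <;>
  · try have s1 : j ≠ i := Ne.symm h1
    try have s2 : b2 ≠ a2 := Ne.symm h2
    try have s3 : b2 ≠ i := Ne.symm h3
    try have s4 : j ≠ a2 := Ne.symm h4
    try have s5 : a2 ≠ i := Ne.symm h5
    try have s6 : b2 ≠ j := Ne.symm h6
    simp only [Gmat, *, lt_self_iff_false, and_true, true_and, and_false, false_and,
      if_true, if_false, eq_self_iff_true, ite_true, ite_false, not_true, not_false_iff]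
    first
    | (split_ifs <;> first | ring | omega)
    | ring
    | omega
    | rfl

lemma Rmat_eq_Gmat (q qi : R) (n : ℕ) :
    Rmat R q qi n = Gmat R q 1 (q - qi) 0 n := by
  ext x y
  simp only [Rmat, Gmat]
  split_ifs <;> rfl

lemma Rmat_transpose_eq_Gmat (q qi : R) (n : ℕ) :
    (Rmat R qi q n)ᵀ = Gmat R qi 1 0 (qi - q) n := by
  ext x y
  simp only [Matrix.transpose_apply, Rmat, Gmat]
  split_ifs <;> first | rfl | omega

lemma Gmat_smul_sub (u v a b c d a' b' c' d' : R) (n : ℕ) :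
    u • Gmat R a b c d n - v • Gmat R a' b' c' d' n =
      Gmat R (u * a - v * a') (u * b - v * b') (u * c - v * c') (u * d - v * d') n := by
  ext x y
  simp only [Matrix.sub_apply, Matrix.smul_apply, smul_eq_mul, Gmat]
  split_ifs <;> ring

theorem stmt17Comm (q qi : R) (n : ℕ) (u v w y : R) :
    ptrans (u • (Rmat R qi q n)ᵀ - v • Rmat R q qi n) *
        (w • (Rmat R qi q n)ᵀ - y • Rmat R q qi n) =
      (w • (Rmat R qi q n)ᵀ - y • Rmat R q qi n) *
        ptrans (u • (Rmat R qi q n)ᵀ - v • Rmat R q qi n) := by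
  rw [Rmat_transpose_eq_Gmat, Rmat_eq_Gmat, Gmat_smul_sub, Gmat_smul_sub]
  exact Gmat_comm _ _ _ _ _ _ _ _ n

/-- partial transposes of spectral R-matrices `R(u,v) = u·(R̄_n)ᵀ − v·R_n`
commute with spectral R-matrices: `(R(u,v))^{t1}·R(w,y) = R(w,y)·(R(u,v))^{t1}`. -/
theorem stmt17 (q qi : A) (hq : ∀ a : A, Commute q a) (hqi : ∀ a : A, Commute qi a)
    (hqinv : q * qi = 1) (hqinv' : qi * q = 1)
    (n : ℕ) (hn : 1 ≤ n) (u v w y : A)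
    (hu : ∀ a : A, Commute u a) (hv : ∀ a : A, Commute v a)
    (hw : ∀ a : A, Commute w a) (hy : ∀ a : A, Commute y a) :
    ptrans (u • (Rmat A qi q n)ᵀ - v • Rmat A q qi n) *
        (w • (Rmat A qi q n)ᵀ - y • Rmat A q qi n) =
      (w • (Rmat A qi q n)ᵀ - y • Rmat A q qi n) *
        ptrans (u • (Rmat A qi q n)ᵀ - v • Rmat A q qi n) := by
  classical
  set Z := Subring.center A with hZ
  have mem : ∀ x : A, (∀ a : A, Commute x a) → x ∈ Z :=
    fun x hx => Subring.mem_center_iff.mpr fun g => (hx g).symm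
  set f : Z →+* A := Z.subtype with hf
  let q' : Z := ⟨q, mem q hq⟩
  let qi' : Z := ⟨qi, mem qi hqi⟩
  let u' : Z := ⟨u, mem u hu⟩
  let v' : Z := ⟨v, mem v hv⟩
  let w' : Z := ⟨w, mem w hw⟩
  let y' : Z := ⟨y, mem y hy⟩
  have hmapR : ∀ s si : Z, (Rmat Z s si n).map f = Rmat A (s : A) (si : A) n := by
    intro s si; ext x y
    simp only [Matrix.map_apply, Rmat]
    split_ifs <;> simp [Subring.coe_subtype, hf]
  have hmapRe : ∀ (s si : Z) (p r : Fin n × Fin n),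
      ((Rmat Z s si n p r : Z) : A) = Rmat A (s : A) (si : A) n p r := by
    intro s si p r
    rw [← hmapR s si]
    rfl
  have hmapS : ∀ uu vv : Z,
      ((uu • (Rmat Z qi' q' n)ᵀ - vv • Rmat Z q' qi' n).map f) =
        ((uu : A) • (Rmat A qi q n)ᵀ - (vv : A) • Rmat A q qi n) := by
    intro uu vv; ext x y
    simp only [Matrix.map_apply, Matrix.sub_apply, Matrix.smul_apply,
      Matrix.transpose_apply, smul_eq_mul, hf, Subring.coe_subtype]
    push_cast [hmapRe]
    rfl
  have hpt : ∀ M : Matrix (Fin n × Fin n) (Fin n × Fin n) Z,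
      (ptrans M).map f = ptrans (M.map f) := fun _ => rfl
  have hSu : (ptrans (u' • (Rmat Z qi' q' n)ᵀ - v' • Rmat Z q' qi' n)).map f =
      ptrans (u • (Rmat A qi q n)ᵀ - v • Rmat A q qi n) := by
    rw [hpt, hmapS]
  have hT : ((w' • (Rmat Z qi' q' n)ᵀ - y' • Rmat Z q' qi' n)).map f =
      (w • (Rmat A qi q n)ᵀ - y • Rmat A q qi n) := hmapS w' y'
  have key := stmt17Comm (R := Z) q' qi' n u' v' w' y'
  calc ptrans (u • (Rmat A qi q n)ᵀ - v • Rmat A q qi n) *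
        (w • (Rmat A qi q n)ᵀ - y • Rmat A q qi n)
      = ((ptrans (u' • (Rmat Z qi' q' n)ᵀ - v' • Rmat Z q' qi' n)) *
          (w' • (Rmat Z qi' q' n)ᵀ - y' • Rmat Z q' qi' n)).map f := by
        rw [Matrix.map_mul, hSu, hT]
    _ = ((w' • (Rmat Z qi' q' n)ᵀ - y' • Rmat Z q' qi' n) *
          (ptrans (u' • (Rmat Z qi' q' n)ᵀ - v' • Rmat Z q' qi' n))).map f := by
        rw [key]
    _ = (w • (Rmat A qi q n)ᵀ - y • Rmat A q qi n) *
        ptrans (u • (Rmat A qi q n)ᵀ - v • Rmat A q qi n) := by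
        rw [Matrix.map_mul, hSu, hT]
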